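/- Consider the ODE dx₁/dt = x₁·[(1−x₁) − (v_M/2)(1−x₁)²] with v_M > 0 and x₁(0) ∈ (0,1). If v_M < 2/(1−x₁(0)) then x₁(t) → 1 as t → ∞; if v_M > 2/(1−x₁(0)) then x₁(t) → 0 as t → ∞. -/

import Mathlib

open Set Filter Real

lemma expRep (u g : ℝ → ℝ) (hg : Continuous g)
    (hu : ∀ t, 0 ≤ t → HasDerivAt u (u t * g t) t) :
    ∀ t, 0 ≤ t → u t = u 0 * Real.exp (∫ s in (0:ℝ)..t, g s) := by
  intro t ht
  set H : ℝ → ℝ := fun r => ∫ s in (0:ℝ)..r, g s with hHdef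
  have hH : ∀ r : ℝ, HasDerivAt H (g r) r := fun r =>
    intervalIntegral.integral_hasDerivAt_right (hg.intervalIntegrable 0 r)
      (hg.stronglyMeasurableAtFilter _ _) hg.continuousAt
  set w : ℝ → ℝ := fun r => u r * Real.exp (-(H r)) with hwdef
  have hw : ∀ r, 0 ≤ r → HasDerivAt w 0 r := by
    intro r hr
    have h1 : HasDerivAt (fun s => Real.exp (-(H s))) (Real.exp (-(H r)) * (-(g r))) r := by
      simpa [mul_comm] using ((hH r).neg).exp
    have h2 := (hu r hr).mul h1
    refine h2.congr_deriv ?_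
    ring
  have hconst : w t = w 0 := by
    have hcont : ContinuousOn w (Icc 0 t) := fun r hr =>
      ((hw r hr.1).continuousAt).continuousWithinAt
    exact constant_of_has_deriv_right_zero hcont
      (fun r hr => ((hw r hr.1).hasDerivWithinAt)) t ⟨ht, le_rfl⟩
  have hH0 : H 0 = 0 := intervalIntegral.integral_same
  have hx : u t * Real.exp (-(H t)) = u 0 := by
    have := hconst
    simp only [hwdef, hH0, neg_zero, Real.exp_zero, mul_one] at this
    exact this
  calc u t = u t * Real.exp (-(H t)) * Real.exp (H t) := by
        rw [mul_assoc, ← Real.exp_add]; simp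
    _ = u 0 * Real.exp (H t) := by rw [hx]

set_option maxHeartbeats 1000000 in
/-- For dx/dt = x[(1−x) − (v_M/2)(1−x)²] with v_M > 0 and
x(0) ∈ (0,1): if v_M < 2/(1−x(0)) then x(t) → 1, and if v_M > 2/(1−x(0))
then x(t) → 0, as t → ∞. -/
theorem stmt11 (v : ℝ) (hv : 0 < v) (x : ℝ → ℝ) (hx0 : x 0 ∈ Set.Ioo (0:ℝ) 1)
    (hode : ∀ t : ℝ, 0 ≤ t →
      HasDerivAt x (x t * ((1 - x t) - v / 2 * (1 - x t)^2)) t) :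
    (v < 2 / (1 - x 0) → Filter.Tendsto x Filter.atTop (nhds 1)) ∧
    (2 / (1 - x 0) < v → Filter.Tendsto x Filter.atTop (nhds 0)) := by
  obtain ⟨ha0, ha1⟩ := hx0
  set c : ℝ := 1 - 2 / v with hc
  have hcontOn : ContinuousOn x (Ici 0) := fun t ht =>
    ((hode t ht).continuousAt).continuousWithinAt
  -- continuous extension of x
  set xe : ℝ → ℝ := fun t => x (max t 0) with hxe
  have hxe_eq : ∀ t : ℝ, 0 ≤ t → xe t = x t := by
    intro t ht; simp [hxe, max_eq_left ht]
  have hxe_cont : Continuous xe :=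
    hcontOn.comp_continuous (continuous_id.max continuous_const)
      (fun t => le_max_right t 0)
  -- invariance (i): x stays positive
  have hx_pos : ∀ t, 0 ≤ t → 0 < x t := by
    intro t ht
    have h := expRep x (fun t => (1 - xe t) - v / 2 * (1 - xe t)^2)
      (by continuity)
      (by
        intro s hs
        have h2 := hode s hs
        convert h2 using 1
        simp only [hxe, max_eq_left hs]) t ht
    rw [h]
    positivity
  -- invariance (ii): x stays below 1
  have hx_lt1 : ∀ t, 0 ≤ t → x t < 1 := by
    intro t ht
    have h := expRep (fun t => 1 - x t) (fun t => -(xe t) * (1 - v / 2 * (1 - xe t)))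
      (by continuity)
      (by
        intro s hs
        have h2 := (hode s hs).const_sub 1
        refine h2.congr_deriv ?_
        simp only [hxe, max_eq_left hs]
        ring) t ht
    have : (0:ℝ) < 1 - x t := by
      rw [h]
      exact mul_pos (by linarith) (Real.exp_pos _)
    linarith
  -- invariance (iii): sign of x - c is preserved
  have hsign : ∀ t, 0 ≤ t →
      x t - c = (x 0 - c) * Real.exp (∫ s in (0:ℝ)..t, v / 2 * xe s * (1 - xe s)) := by
    intro t ht
    have h := expRep (fun t => x t - c) (fun t => v / 2 * xe t * (1 - xe t))
      (by continuity)
      (by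
        intro s hs
        have h2 := (hode s hs).sub_const c
        refine h2.congr_deriv ?_
        simp only [hxe, max_eq_left hs, hc]
        field_simp
        ring) t ht
    simpa using h
  -- factorization of the vector field
  have hfac : ∀ y : ℝ, y * ((1 - y) - v / 2 * (1 - y)^2) = v / 2 * y * (1 - y) * (y - c) := by
    intro y
    rw [hc]
    field_simp
    ring
  constructor
  · -- Case 1: v < 2/(1 - x 0), so x 0 > c
    intro hlt
    have hac : c < x 0 := by
      rw [lt_div_iff₀ (by linarith : (0:ℝ) < 1 - x 0)] at hlt
      have h3 : 1 - x 0 < 2 / v := by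
        rw [lt_div_iff₀ hv]; linarith
      rw [hc]; linarith
    have hstar : ∀ t, 0 ≤ t → c < x t := by
      intro t ht
      have heq := hsign t ht
      have hp : (0:ℝ) < (x 0 - c) * Real.exp (∫ s in (0:ℝ)..t, v / 2 * xe s * (1 - xe s)) := by
        exact mul_pos (by linarith) (Real.exp_pos _)
      have : (0:ℝ) < x t - c := by rw [heq]; exact hp
      linarith
    have hderiv_pos : ∀ t, 0 ≤ t → 0 < x t * ((1 - x t) - v / 2 * (1 - x t)^2) := by
      intro t ht
      rw [hfac]
      have h1 := hx_pos t ht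
      have h2 := hx_lt1 t ht
      have h3 := hstar t ht
      have hp : (0:ℝ) < v / 2 * x t := mul_pos (by positivity) h1
      exact mul_pos (mul_pos hp (by linarith)) (by linarith)
    have hmono : StrictMonoOn x (Ici 0) := by
      apply strictMonoOn_of_deriv_pos (convex_Ici 0) hcontOn
      intro t ht
      rw [interior_Ici] at ht
      rw [(hode t ht.le).deriv]
      exact hderiv_pos t ht.le
    have hmonoe : Monotone xe := by
      intro s t hst
      exact hmono.monotoneOn (le_max_right s 0) (le_max_right t 0)
        (max_le_max hst le_rfl)
    have hbdd : BddAbove (range xe) := by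
      refine ⟨1, ?_⟩
      rintro y ⟨t, rfl⟩
      exact (hx_lt1 _ (le_max_right t 0)).le
    have htend : Tendsto xe atTop (nhds (⨆ t, xe t)) := tendsto_atTop_ciSup hmonoe hbdd
    set L : ℝ := ⨆ t, xe t with hL
    have hxle : ∀ t, 0 ≤ t → x t ≤ L := by
      intro t ht
      have := le_ciSup hbdd t
      rwa [hxe_eq t ht] at this
    have hL1 : L ≤ 1 := ciSup_le fun t => (hx_lt1 _ (le_max_right t 0)).le
    have haL : x 0 ≤ L := hxle 0 le_rfl
    have hLeq : L = 1 := by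
      by_contra hne
      have hL' : L < 1 := lt_of_le_of_ne hL1 hne
      set ε : ℝ := v / 2 * x 0 * (1 - L) * (x 0 - c) with hε
      have hεpos : 0 < ε := by
        have h1 : (0:ℝ) < v / 2 * x 0 := mul_pos (by positivity) ha0
        exact mul_pos (mul_pos h1 (by linarith)) (by linarith)
      have hdge : ∀ t, 0 ≤ t → ε ≤ x t * ((1 - x t) - v / 2 * (1 - x t)^2) := by
        intro t ht
        rw [hfac]
        have h1 : x 0 ≤ x t := hmono.monotoneOn self_mem_Ici ht ht
        have h2 : x t ≤ L := hxle t ht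
        have hxt := hx_pos t ht
        have s1 : v / 2 * x 0 ≤ v / 2 * x t :=
          mul_le_mul_of_nonneg_left h1 (by positivity)
        have s2 : v / 2 * x 0 * (1 - L) ≤ v / 2 * x t * (1 - x t) :=
          mul_le_mul s1 (by linarith) (by linarith)
            (mul_nonneg (by positivity) hxt.le)
        exact mul_le_mul s2 (by linarith) (by linarith)
          (mul_nonneg (mul_nonneg (by positivity) hxt.le) (by linarith [hx_lt1 t ht]))
      -- linear growth: x t ≥ x 0 + ε t
      have hgrow : ∀ t, 0 ≤ t → x 0 + ε * t ≤ x t := by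
        intro t ht
        have hmφ : MonotoneOn (fun t => x t - ε * t) (Ici 0) := by
          apply monotoneOn_of_deriv_nonneg (convex_Ici 0)
          · exact (hcontOn.sub ((continuous_const.mul continuous_id).continuousOn))
          · intro s hs
            rw [interior_Ici] at hs
            exact ((hode s hs.le).sub
              ((hasDerivAt_id s).const_mul ε)).differentiableAt.differentiableWithinAt
          · intro s hs
            rw [interior_Ici] at hs
            have hd : HasDerivAt (fun t => x t - ε * t)
                (x s * ((1 - x s) - v / 2 * (1 - x s)^2) - ε * 1) s :=
              (hode s hs.le).sub ((hasDerivAt_id s).const_mul ε)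
            rw [hd.deriv]
            have := hdge s hs.le
            linarith
        have := hmφ self_mem_Ici ht ht
        simp only [mul_zero, sub_zero] at this
        linarith
      have ht0pos : 0 ≤ (L - x 0) / ε + 1 := by
        have : 0 ≤ (L - x 0) / ε := div_nonneg (by linarith) hεpos.le
        linarith
      have h1 := hgrow _ ht0pos
      have h2 := hxle _ ht0pos
      have h3 : ε * ((L - x 0) / ε + 1) = L - x 0 + ε := by
        field_simp
      nlinarith
    rw [hLeq] at htend
    apply htend.congr'
    filter_upwards [eventually_ge_atTop (0:ℝ)] with t ht
    exact hxe_eq t ht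
  · -- Case 2: 2/(1 - x 0) < v, so x 0 < c
    intro hgt
    have hac : x 0 < c := by
      rw [div_lt_iff₀ (by linarith : (0:ℝ) < 1 - x 0)] at hgt
      have h3 : 2 / v < 1 - x 0 := by
        rw [div_lt_iff₀ hv]; linarith
      rw [hc]; linarith
    have hstar : ∀ t, 0 ≤ t → x t < c := by
      intro t ht
      have heq := hsign t ht
      have hp : (x 0 - c) * Real.exp (∫ s in (0:ℝ)..t, v / 2 * xe s * (1 - xe s)) < 0 :=
        mul_neg_of_neg_of_pos (by linarith) (Real.exp_pos _)
      have : x t - c < 0 := by rw [heq]; exact hp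
      linarith
    have hderiv_neg : ∀ t, 0 ≤ t → x t * ((1 - x t) - v / 2 * (1 - x t)^2) < 0 := by
      intro t ht
      rw [hfac]
      have h1 := hx_pos t ht
      have h2 := hx_lt1 t ht
      have h3 := hstar t ht
      have hp : (0:ℝ) < v / 2 * x t * (1 - x t) :=
        mul_pos (mul_pos (by positivity) h1) (by linarith)
      exact mul_neg_of_pos_of_neg hp (by linarith)
    have hanti : StrictAntiOn x (Ici 0) := by
      apply strictAntiOn_of_deriv_neg (convex_Ici 0) hcontOn
      intro t ht
      rw [interior_Ici] at ht
      rw [(hode t ht.le).deriv]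
      exact hderiv_neg t ht.le
    have hantie : Antitone xe := by
      intro s t hst
      exact hanti.antitoneOn (le_max_right s 0) (le_max_right t 0)
        (max_le_max hst le_rfl)
    have hbdd : BddBelow (range xe) := by
      refine ⟨0, ?_⟩
      rintro y ⟨t, rfl⟩
      exact (hx_pos _ (le_max_right t 0)).le
    have htend : Tendsto xe atTop (nhds (⨅ t, xe t)) := tendsto_atTop_ciInf hantie hbdd
    set L : ℝ := ⨅ t, xe t with hL
    have hxge : ∀ t, 0 ≤ t → L ≤ x t := by
      intro t ht
      have := ciInf_le hbdd t
      rwa [hxe_eq t ht] at this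
    have hL0 : 0 ≤ L := le_ciInf fun t => (hx_pos _ (le_max_right t 0)).le
    have haL : L ≤ x 0 := hxge 0 le_rfl
    have hLeq : L = 0 := by
      by_contra hne
      have hL' : 0 < L := lt_of_le_of_ne hL0 (Ne.symm hne)
      set ε : ℝ := v / 2 * L * (1 - x 0) * (c - x 0) with hε
      have hεpos : 0 < ε := by
        have h1 : (0:ℝ) < v / 2 * L := mul_pos (by positivity) hL'
        exact mul_pos (mul_pos h1 (by linarith)) (by linarith)
      have hdge : ∀ t, 0 ≤ t → x t * ((1 - x t) - v / 2 * (1 - x t)^2) ≤ -ε := by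
        intro t ht
        rw [hfac]
        have h1 : x t ≤ x 0 := hanti.antitoneOn self_mem_Ici ht ht
        have h2 : L ≤ x t := hxge t ht
        have hxt := hx_pos t ht
        have s1 : v / 2 * L ≤ v / 2 * x t :=
          mul_le_mul_of_nonneg_left h2 (by positivity)
        have s2 : v / 2 * L * (1 - x 0) ≤ v / 2 * x t * (1 - x t) :=
          mul_le_mul s1 (by linarith) (by linarith)
            (mul_nonneg (by positivity) hxt.le)
        have s3 : v / 2 * L * (1 - x 0) * (c - x 0) ≤ v / 2 * x t * (1 - x t) * (c - x t) :=
          mul_le_mul s2 (by linarith) (by linarith)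
            (mul_nonneg (mul_nonneg (by positivity) hxt.le) (by linarith [hx_lt1 t ht]))
        nlinarith [s3]
      have hgrow : ∀ t, 0 ≤ t → x t ≤ x 0 - ε * t := by
        intro t ht
        have hmφ : MonotoneOn (fun t => -(x t) - ε * t) (Ici 0) := by
          apply monotoneOn_of_deriv_nonneg (convex_Ici 0)
          · exact ((hcontOn.neg).sub ((continuous_const.mul continuous_id).continuousOn))
          · intro s hs
            rw [interior_Ici] at hs
            exact (((hode s hs.le).neg).sub
              ((hasDerivAt_id s).const_mul ε)).differentiableAt.differentiableWithinAt
          · intro s hs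
            rw [interior_Ici] at hs
            have hd : HasDerivAt (fun t => -(x t) - ε * t)
                (-(x s * ((1 - x s) - v / 2 * (1 - x s)^2)) - ε * 1) s :=
              ((hode s hs.le).neg).sub ((hasDerivAt_id s).const_mul ε)
            rw [hd.deriv]
            have := hdge s hs.le
            linarith
        have := hmφ self_mem_Ici ht ht
        simp only [mul_zero, sub_zero] at this
        linarith
      have ht0pos : 0 ≤ (x 0 - L) / ε + 1 := by
        have : 0 ≤ (x 0 - L) / ε := div_nonneg (by linarith) hεpos.le
        linarith
      have h1 := hgrow _ ht0pos
      have h2 := hxge _ ht0pos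
      have h3 : ε * ((x 0 - L) / ε + 1) = x 0 - L + ε := by
        field_simp
      nlinarith
    rw [hLeq] at htend
    apply htend.congr'
    filter_upwards [eventually_ge_atTop (0:ℝ)] with t ht
    exact hxe_eq t ht
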